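/- For every integer n ≥ 1, the sum Σ_{d∈𝒟} r′_d(n) is at most 4√n + 2. -/

import Mathlib

noncomputable section

/-- The set `𝒟` of negative squarefree integers `d` satisfying the Heegner condition
`d ≡ ν² (mod 4N)` for some `ν` coprime to `4N`. -/
def Dset (N : ℕ) : Set ℤ :=
  {d : ℤ | d < 0 ∧ Squarefree d ∧
    ∃ ν : ℤ, Int.gcd ν (4 * N) = 1 ∧ d ≡ ν ^ 2 [ZMOD (4 * N : ℤ)]}

/-- `r′_d(n)`: the number of pairs `(u, v) ∈ ℕ × ℤ` with `v ≠ 0` and `u² + |d| v² = 4n`. -/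
def rprime (d : ℤ) (n : ℕ) : ℕ :=
  Nat.card {p : ℕ × ℤ // p.2 ≠ 0 ∧ (p.1 : ℤ) ^ 2 + |d| * p.2 ^ 2 = 4 * (n : ℤ)}

lemma sqfree_decomp_unique {a b c e : ℕ} (hb : b ≠ 0) (he : e ≠ 0)
    (ha : Squarefree a) (hc : Squarefree c) (h : a * b ^ 2 = c * e ^ 2) :
    a = c ∧ b = e := by
  have ha0 := ha.ne_zero
  have hc0 := hc.ne_zero
  have key : ∀ p, a.factorization p = c.factorization p := by
    intro p
    have hfac := congrArg Nat.factorization h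
    rw [Nat.factorization_mul ha0 (pow_ne_zero 2 hb),
      Nat.factorization_mul hc0 (pow_ne_zero 2 he),
      Nat.factorization_pow, Nat.factorization_pow] at hfac
    have h1 := DFunLike.congr_fun hfac p
    simp only [Finsupp.add_apply, Finsupp.smul_apply, smul_eq_mul] at h1
    have h2 := ha.natFactorization_le_one p
    have h3 := hc.natFactorization_le_one p
    omega
  have hac : a = c := Nat.eq_of_factorization_eq ha0 hc0 key
  subst hac
  have : b ^ 2 = e ^ 2 := Nat.eq_of_mul_eq_mul_left (Nat.pos_of_ne_zero ha0) h
  exact ⟨rfl, Nat.pow_left_injective (by norm_num) this⟩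

/-- For every `n ≥ 1`, the sum `Σ_{d ∈ 𝒟} r′_d(n)` is at most `4√n + 2`. -/
theorem sum_rprime_le (N : ℕ) (hN : 0 < N) (hNsf : Squarefree N) (n : ℕ) (hn : 1 ≤ n) :
    (∑ᶠ d ∈ Dset N, (rprime d n : ℝ)) ≤ 4 * Real.sqrt n + 2 := by
  classical
  set m := Nat.sqrt (4 * n) with hm
  set Sd : ℤ → Finset (ℕ × ℤ) := fun d =>
    (Finset.range (2 * n + 1) ×ˢ Finset.Icc (-(2 * n : ℤ)) (2 * n)).filter
      (fun p => p.2 ≠ 0 ∧ (p.1 : ℤ) ^ 2 + |d| * p.2 ^ 2 = 4 * (n : ℤ)) with hSd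
  set F : Finset ℤ := (Finset.Icc (-(4 * n : ℤ)) (-1)).filter (· ∈ Dset N) with hF
  -- basic facts about solutions
  have hn1 : (1 : ℤ) ≤ (n : ℤ) := by exact_mod_cast hn
  have hSd_mem : ∀ d : ℤ, d < 0 → ∀ u : ℕ, ∀ v : ℤ,
      ((u, v) ∈ Sd d ↔ v ≠ 0 ∧ (u : ℤ) ^ 2 + |d| * v ^ 2 = 4 * (n : ℤ)) := by
    intro d hd u v
    simp only [hSd, Finset.mem_filter, Finset.mem_product, Finset.mem_range, Finset.mem_Icc]
    constructor
    · rintro ⟨-, hv, heq⟩; exact ⟨hv, heq⟩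
    · rintro ⟨hv, heq⟩
      have hd1 : (1 : ℤ) ≤ |d| := Int.one_le_abs (ne_of_lt hd)
      have hv1 : (1 : ℤ) ≤ v ^ 2 := by nlinarith [Int.one_le_abs hv, sq_abs v]
      have hdv : (1 : ℤ) ≤ |d| * v ^ 2 := one_le_mul_of_one_le_of_one_le hd1 hv1
      have hu2 : (u : ℤ) ^ 2 ≤ 4 * (n : ℤ) := by nlinarith
      have huu : (u : ℤ) < 2 * n + 1 := by nlinarith [Int.natCast_nonneg u]
      have hv2 : v ^ 2 ≤ 4 * (n : ℤ) := by nlinarith [sq_nonneg (u : ℤ)]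
      refine ⟨⟨?_, ?_, ?_⟩, hv, heq⟩
      · exact_mod_cast huu
      · nlinarith
      · nlinarith
  -- rprime as a finset card
  have hcard : ∀ d : ℤ, d < 0 → rprime d n = (Sd d).card := by
    intro d hd
    have hset : {p : ℕ × ℤ | p.2 ≠ 0 ∧ (p.1 : ℤ) ^ 2 + |d| * p.2 ^ 2 = 4 * (n : ℤ)}
        = ↑(Sd d) := by
      ext ⟨u, v⟩
      rw [Finset.mem_coe, hSd_mem d hd u v]
      rfl
    have hr : rprime d n = Nat.card
        ↥{p : ℕ × ℤ | p.2 ≠ 0 ∧ (p.1 : ℤ) ^ 2 + |d| * p.2 ^ 2 = 4 * (n : ℤ)} := rfl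
    rw [hr, Nat.card_coe_set_eq, hset, Set.ncard_coe_finset]
  -- support of the indicator is inside F
  have hsupp : Function.support
      (Set.indicator (Dset N) (fun d => ((rprime d n : ℝ)))) ⊆ ↑F := by
    intro d hd
    simp only [Function.mem_support] at hd
    by_cases hdD : d ∈ Dset N
    · rw [Set.indicator_of_mem hdD] at hd
      have h0 : rprime d n ≠ 0 := by exact_mod_cast hd
      have hdneg := hdD.1
      have hne : (Sd d).Nonempty := by
        rw [← Finset.card_pos, ← hcard d hdneg]; omega
      obtain ⟨⟨u, v⟩, hp⟩ := hne
      rw [hSd_mem d hdneg u v] at hp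
      obtain ⟨hv, heq⟩ := hp
      have hv1 : (1 : ℤ) ≤ v ^ 2 := by nlinarith [Int.one_le_abs hv, sq_abs v]
      have habs : |d| = -d := abs_of_neg hdneg
      have : |d| ≤ 4 * (n : ℤ) := by nlinarith [sq_nonneg (u : ℤ)]
      simp only [hF, Finset.coe_filter, Set.mem_setOf_eq, Finset.mem_Icc]
      exact ⟨⟨by omega, by omega⟩, hdD⟩
    · rw [Set.indicator_of_notMem hdD] at hd
      exact absurd rfl hd
  -- rewrite the finsum as a finite sum
  have hsum : (∑ᶠ d ∈ Dset N, (rprime d n : ℝ)) = ∑ d ∈ F, ((Sd d).card : ℝ) := by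
    rw [finsum_mem_def, finsum_eq_sum_of_support_subset _ hsupp]
    apply Finset.sum_congr rfl
    intro d hd
    have hdD : d ∈ Dset N := (Finset.mem_filter.mp hd).2
    rw [Set.indicator_of_mem hdD, hcard d hdD.1]
  -- the solution sets are pairwise disjoint
  have hdisj : ∀ x ∈ F, ∀ y ∈ F, x ≠ y → Disjoint (Sd x) (Sd y) := by
    intro x hx y hy hxy
    have hxneg : x < 0 := ((Finset.mem_filter.mp hx).2).1
    have hyneg : y < 0 := ((Finset.mem_filter.mp hy).2).1
    rw [Finset.disjoint_left]
    rintro ⟨u, v⟩ hpx hpy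
    rw [hSd_mem x hxneg u v] at hpx
    rw [hSd_mem y hyneg u v] at hpy
    obtain ⟨hv, hex⟩ := hpx
    obtain ⟨-, hey⟩ := hpy
    have hv1 : (0 : ℤ) < v ^ 2 := by positivity
    have : |x| = |y| := by
      have h1 : |x| * v ^ 2 = |y| * v ^ 2 := by linarith
      exact mul_right_cancel₀ (by positivity) h1
    rw [abs_of_neg hxneg, abs_of_neg hyneg] at this
    omega
  have hcardsum : ∑ d ∈ F, (Sd d).card = (F.biUnion Sd).card :=
    (Finset.card_biUnion hdisj).symm
  -- injection into range (m+1) × {-1, 1}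
  have hinj : (F.biUnion Sd).card ≤ (Finset.range (m + 1) ×ˢ ({-1, 1} : Finset ℤ)).card := by
    apply Finset.card_le_card_of_injOn (fun p => (p.1, if 0 < p.2 then (1 : ℤ) else -1))
    · rintro ⟨u, v⟩ hp
      simp only [Finset.mem_coe, Finset.mem_biUnion] at hp
      obtain ⟨d, hdF, hmem⟩ := hp
      have hdneg : d < 0 := ((Finset.mem_filter.mp hdF).2).1
      rw [hSd_mem d hdneg u v] at hmem
      obtain ⟨hv, heq⟩ := hmem
      have hd1 : (1 : ℤ) ≤ |d| := Int.one_le_abs (ne_of_lt hdneg)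
      have hv1 : (1 : ℤ) ≤ v ^ 2 := by nlinarith [Int.one_le_abs hv, sq_abs v]
      have hu2 : (u : ℤ) ^ 2 ≤ 4 * (n : ℤ) := by nlinarith
      have hu2' : u * u ≤ 4 * n := by
        have : ((u * u : ℕ) : ℤ) ≤ ((4 * n : ℕ) : ℤ) := by push_cast; nlinarith
        exact_mod_cast this
      have hum : u ≤ m := Nat.le_sqrt.mpr hu2'
      simp only [Finset.mem_coe, Finset.mem_product, Finset.mem_range, Finset.mem_insert, Finset.mem_singleton]
      refine ⟨by omega, ?_⟩
      split <;> simp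
    · rintro ⟨u, v⟩ hp ⟨u', v'⟩ hp' heq
      simp only [Finset.mem_coe, Finset.mem_biUnion] at hp hp'
      obtain ⟨d, hdF, hmem⟩ := hp
      obtain ⟨d', hdF', hmem'⟩ := hp'
      have hdD : d ∈ Dset N := (Finset.mem_filter.mp hdF).2
      have hdD' : d' ∈ Dset N := (Finset.mem_filter.mp hdF').2
      rw [hSd_mem d hdD.1 u v] at hmem
      rw [hSd_mem d' hdD'.1 u' v'] at hmem'
      obtain ⟨hv, he1⟩ := hmem
      obtain ⟨hv', he2⟩ := hmem'
      have huu : u = u' := congrArg Prod.fst heq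
      have hss : (if 0 < v then (1 : ℤ) else -1) = (if 0 < v' then (1 : ℤ) else -1) :=
        congrArg Prod.snd heq
      subst huu
      have hZeq : |d| * v ^ 2 = |d'| * v' ^ 2 := by linarith
      have hNeq : d.natAbs * v.natAbs ^ 2 = d'.natAbs * v'.natAbs ^ 2 := by
        have := congrArg Int.natAbs hZeq
        simpa [Int.natAbs_mul, Int.natAbs_pow, Int.natAbs_abs] using this
      have hsf : Squarefree d.natAbs := Int.squarefree_natAbs.mpr hdD.2.1
      have hsf' : Squarefree d'.natAbs := Int.squarefree_natAbs.mpr hdD'.2.1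
      have hvb : v.natAbs ≠ 0 := fun h => hv (Int.natAbs_eq_zero.mp h)
      have hvb' : v'.natAbs ≠ 0 := fun h => hv' (Int.natAbs_eq_zero.mp h)
      obtain ⟨-, hveq⟩ := sqfree_decomp_unique hvb hvb' hsf hsf' hNeq
      have habs : |v| = |v'| := by
        rw [Int.abs_eq_natAbs, Int.abs_eq_natAbs, hveq]
      have : v = v' := by
        rcases hv.lt_or_gt with h1 | h1 <;> rcases hv'.lt_or_gt with h2 | h2
        · rw [abs_of_neg h1, abs_of_neg h2] at habs; omega
        · simp [h1.asymm, h2] at hss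
        · simp [h1, h2.asymm] at hss
        · rw [abs_of_pos h1, abs_of_pos h2] at habs; exact habs
      rw [this]
  -- final arithmetic
  have hcardU : (Finset.range (m + 1) ×ˢ ({-1, 1} : Finset ℤ)).card = (m + 1) * 2 := by
    rw [Finset.card_product, Finset.card_range]
    rfl
  have hmsq : m ^ 2 ≤ 4 * n := Nat.sqrt_le' (4 * n)
  have hmle : (m : ℝ) ≤ 2 * Real.sqrt n := by
    have h1 : (m : ℝ) ^ 2 ≤ 4 * n := by
      have : ((m ^ 2 : ℕ) : ℝ) ≤ ((4 * n : ℕ) : ℝ) := by exact_mod_cast hmsq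
      push_cast at this; nlinarith
    have h2 : Real.sqrt n ^ 2 = n := Real.sq_sqrt (by positivity)
    nlinarith [Real.sqrt_nonneg (n : ℝ), Nat.cast_nonneg (α := ℝ) m]
  calc (∑ᶠ d ∈ Dset N, (rprime d n : ℝ)) = ∑ d ∈ F, ((Sd d).card : ℝ) := hsum
    _ = ((∑ d ∈ F, (Sd d).card : ℕ) : ℝ) := by push_cast; ring
    _ ≤ (((m + 1) * 2 : ℕ) : ℝ) := by
        rw [hcardsum]
        exact_mod_cast hcardU ▸ hinj
    _ ≤ 4 * Real.sqrt n + 2 := by push_cast; nlinarith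

end
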